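/- Let π ≤ β ≤ 2π, let ψ be the normalized positive solution with c = c_β, and set f(θ) = ψ'(θ)/ψ(θ). For π/2 ≤ γ ≤ π let θ₁ ∈ (0, π/2] be the angle determined by cot θ₁ = sin γ. Then ((2 + cos γ)/(1 + sin²γ))·f(θ₁) ≥ f(π/2). -/

import Mathlib

open Real Set Filter
open scoped Classical

/-- `c` solves the Hardy-constant equation for the angle `β`. -/
def hardyEq (c β : ℝ) : Prop :=
  Real.sqrt c * Real.tan (Real.sqrt c * ((β - Real.pi) / 2)) =
    2 * (Real.Gamma ((3 + Real.sqrt (1 - 4 * c)) / 4) /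
         Real.Gamma ((1 + Real.sqrt (1 - 4 * c)) / 4)) ^ 2

/-- `βcr` is the critical angle: the unique angle in `(π, 2π)` with
`tan((βcr − π)/4) = 4 (Γ(3/4)/Γ(1/4))²`. -/
def isBetaCr (βcr : ℝ) : Prop :=
  βcr ∈ Set.Ioo Real.pi (2 * Real.pi) ∧
    Real.tan ((βcr - Real.pi) / 4) = 4 * (Real.Gamma (3 / 4) / Real.Gamma (1 / 4)) ^ 2

/-- `c = c_β`: for `β ≤ βcr`, `c = 1/4`; for `β > βcr`, `c` is the unique solution in
`(0, 1/4]` of the Hardy-constant equation for `β`. -/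
def isHardyConst (βcr β c : ℝ) : Prop :=
  (β ≤ βcr ∧ c = 1 / 4) ∨ (βcr < β ∧ c ∈ Set.Ioc (0 : ℝ) (1 / 4) ∧ hardyEq c β)

/-- The potential `V` on `(0, β)`. -/
noncomputable def Vpot (β θ : ℝ) : ℝ :=
  if θ < Real.pi / 2 then 1 / Real.sin θ ^ 2
  else if θ < β - Real.pi / 2 then 1
  else 1 / Real.sin (β - θ) ^ 2

lemma tan_le_two_mul {x : ℝ} (h0 : 0 ≤ x) (h1 : x ≤ Real.pi/4) :
    Real.tan x ≤ 2 * x := by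
  have hπ := Real.pi_pos
  have hsub : Icc (0:ℝ) (Real.pi/4) ⊆ Ioo (-(Real.pi/2)) (Real.pi/2) := by
    intro y hy
    exact ⟨by linarith [hy.1], by linarith [hy.2]⟩
  have key : MonotoneOn (fun y => 2*y - Real.tan y) (Icc 0 (Real.pi/4)) := by
    apply monotoneOn_of_deriv_nonneg (convex_Icc _ _)
    · apply ContinuousOn.sub
      · exact (continuous_const.mul continuous_id).continuousOn
      · intro y hy
        exact (Real.continuousAt_tan.2
          (ne_of_gt (Real.cos_pos_of_mem_Ioo (hsub hy)))).continuousWithinAt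
    · intro y hy
      rw [interior_Icc] at hy
      have hcos : Real.cos y ≠ 0 :=
        ne_of_gt (Real.cos_pos_of_mem_Ioo (hsub (Ioo_subset_Icc_self hy)))
      exact (((hasDerivAt_id y).const_mul 2).sub
        (Real.hasDerivAt_tan hcos)).differentiableAt.differentiableWithinAt
    · intro y hy
      rw [interior_Icc] at hy
      have hcospos : 0 < Real.cos y := Real.cos_pos_of_mem_Ioo (hsub (Ioo_subset_Icc_self hy))
      have hd : HasDerivAt (fun y => 2*y - Real.tan y) (2*1 - 1/Real.cos y^2) y :=
        ((hasDerivAt_id y).const_mul 2).sub (Real.hasDerivAt_tan (ne_of_gt hcospos))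
      rw [hd.deriv]
      have hcge : Real.sqrt 2 / 2 ≤ Real.cos y := by
        have h := Real.cos_le_cos_of_nonneg_of_le_pi hy.1.le (by linarith) hy.2.le
        rwa [Real.cos_pi_div_four] at h
      have h2 : Real.sqrt 2 ^ 2 = 2 := Real.sq_sqrt (by norm_num)
      have hsq : (1:ℝ)/2 ≤ Real.cos y ^ 2 := by nlinarith [Real.sqrt_nonneg 2]
      have : 1 / Real.cos y ^ 2 ≤ 2 := by
        rw [div_le_iff₀ (by positivity)]
        nlinarith
      linarith
  have h := key ⟨le_refl 0, by linarith⟩ ⟨h0, h1⟩ h0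
  simp only [Real.tan_zero, mul_zero, sub_zero] at h
  linarith

set_option maxHeartbeats 1000000 in
/-- Let `ψ` be the normalized positive solution (extended symmetrically to `(0, β)`) of
`−ψ'' = c_β·V·ψ` with `ψ'(β/2) = 0` and `ψ(θ)/θ^α → 1` as `θ → 0+`, and
`f = ψ'/ψ`.  For `π/2 ≤ γ ≤ π`, if `θ₁ ∈ (0, π/2]` satisfies `cot θ₁ = sin γ`, then
`((2 + cos γ)/(1 + sin²γ))·f(θ₁) ≥ f(π/2)`. -/
theorem f_theta_one_lower_bound
    (β βcr cβ α : ℝ) (ψ ψ' : ℝ → ℝ)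
    (hβ1 : Real.pi ≤ β) (hβ2 : β ≤ 2 * Real.pi)
    (hβcr : isBetaCr βcr) (hcβ : isHardyConst βcr β cβ)
    (hα : α = (1 + Real.sqrt (1 - 4 * cβ)) / 2)
    (hpos : ∀ θ ∈ Set.Ioo 0 β, 0 < ψ θ)
    (hder : ∀ θ ∈ Set.Ioo 0 β, HasDerivAt ψ (ψ' θ) θ)
    (hode : ∀ θ ∈ Set.Ioo 0 β, HasDerivAt ψ' (-(cβ * Vpot β θ * ψ θ)) θ)
    (hbc : ψ' (β / 2) = 0)
    (hsym : ∀ θ, ψ (β - θ) = ψ θ)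
    (hnorm : Filter.Tendsto (fun θ => ψ θ / θ ^ α) (nhdsWithin 0 (Set.Ioi 0)) (nhds 1))
    (γ θ₁ : ℝ) (hγ1 : Real.pi / 2 ≤ γ) (hγ2 : γ ≤ Real.pi)
    (hθ₁ : θ₁ ∈ Set.Ioc 0 (Real.pi / 2))
    (hcot : Real.cot θ₁ = Real.sin γ) :
    ψ' (Real.pi / 2) / ψ (Real.pi / 2) ≤
      ((2 + Real.cos γ) / (1 + Real.sin γ ^ 2)) * (ψ' θ₁ / ψ θ₁) := by
  obtain ⟨hc0, hc4⟩ : 0 < cβ ∧ cβ ≤ 1/4 := by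
    rcases hcβ with ⟨_, hc⟩ | ⟨_, hc, _⟩
    · exact ⟨by rw [hc]; norm_num, by rw [hc]⟩
    · exact ⟨hc.1, hc.2⟩
  have hπ := Real.pi_pos
  have hβ0 : 0 < β := lt_of_lt_of_le hπ hβ1
  have hhalf : Real.pi/2 ≤ β/2 := by linarith
  have hmemIcc : Icc (Real.pi/2) (β/2) ⊆ Ioo 0 β :=
    fun x hx => ⟨by linarith [hx.1], by linarith [hx.2]⟩
  have hp2β : Real.pi/2 ∈ Ioo 0 β := ⟨by linarith, by linarith⟩
  have hθ₁β : θ₁ ∈ Ioo 0 β := ⟨hθ₁.1, by linarith [hθ₁.2]⟩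
  have hψp2 : 0 < ψ (Real.pi/2) := hpos _ hp2β
  have hψθ₁ : 0 < ψ θ₁ := hpos _ hθ₁β
  have hVnonneg : ∀ x, 0 ≤ Vpot β x := by
    intro x; unfold Vpot; split_ifs <;> positivity
  -- Step 1 : 0 ≤ ψ'(π/2)
  have hψ'anti : AntitoneOn ψ' (Icc (Real.pi/2) (β/2)) := by
    apply antitoneOn_of_deriv_nonpos (convex_Icc _ _)
    · intro x hx
      exact (hode x (hmemIcc hx)).continuousAt.continuousWithinAt
    · intro x hx
      rw [interior_Icc] at hx
      exact (hode x (hmemIcc (Ioo_subset_Icc_self hx))).differentiableAt.differentiableWithinAt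
    · intro x hx
      rw [interior_Icc] at hx
      rw [(hode x (hmemIcc (Ioo_subset_Icc_self hx))).deriv]
      have h1 := hVnonneg x
      have h2 := (hpos x (hmemIcc (Ioo_subset_Icc_self hx))).le
      have : 0 ≤ cβ * Vpot β x * ψ x := by positivity
      linarith
  have hF0' : 0 ≤ ψ' (Real.pi/2) := by
    have := hψ'anti ⟨le_refl _, hhalf⟩ ⟨hhalf, le_refl _⟩ hhalf
    rw [hbc] at this; linarith
  have hF0 : 0 ≤ ψ' (Real.pi/2) / ψ (Real.pi/2) := div_nonneg hF0' hψp2.le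
  -- Step 2 : ψ'(π/2)/ψ(π/2) ≤ π·cβ
  have hscpos : 0 < Real.sqrt cβ := Real.sqrt_pos.2 hc0
  have hsc : Real.sqrt cβ * Real.sqrt cβ = cβ := Real.mul_self_sqrt hc0.le
  have hsc2 : Real.sqrt cβ ≤ 1/2 := by
    have h14 : Real.sqrt ((1:ℝ)/4) = 1/2 := by
      rw [show (1/4:ℝ) = (1/2)^2 by norm_num, Real.sqrt_sq (by norm_num)]
    calc Real.sqrt cβ ≤ Real.sqrt (1/4) := Real.sqrt_le_sqrt hc4
    _ = 1/2 := h14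
  set G : ℝ → ℝ := fun θ => Real.arctan (ψ' θ / ψ θ / Real.sqrt cβ) + Real.sqrt cβ * θ with hG
  have hGconst : G (β/2) = G (Real.pi/2) := by
    have hcont : ContinuousOn G (Icc (Real.pi/2) (β/2)) := by
      intro x hx
      have hxm := hmemIcc hx
      have hψx := (hpos x hxm).ne'
      exact ((Real.continuous_arctan.continuousAt.comp
        (((hode x hxm).continuousAt.div (hder x hxm).continuousAt hψx).div
          continuousAt_const (ne_of_gt hscpos))).add
        (continuousAt_const.mul continuousAt_id)).continuousWithinAt
    have hderiv : ∀ x ∈ Ico (Real.pi/2) (β/2), HasDerivWithinAt G 0 (Ici x) x := by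
      intro x hx
      have hxm : x ∈ Ioo 0 β := ⟨by linarith [hx.1], by linarith [hx.2]⟩
      have hψx : 0 < ψ x := hpos x hxm
      have hV : Vpot β x = 1 := by
        unfold Vpot
        rw [if_neg (by push_neg; exact hx.1), if_pos (by linarith [hx.2])]
      have hf : HasDerivAt (fun θ => ψ' θ / ψ θ)
          ((-(cβ * Vpot β x * ψ x) * ψ x - ψ' x * ψ' x) / (ψ x)^2) x :=
        (hode x hxm).div (hder x hxm) hψx.ne'
      have hfval : (-(cβ * Vpot β x * ψ x) * ψ x - ψ' x * ψ' x) / (ψ x)^2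
          = -cβ - (ψ' x / ψ x)^2 := by
        rw [hV]; field_simp <;> ring
      rw [hfval] at hf
      have harc : HasDerivAt (fun θ => Real.arctan (ψ' θ / ψ θ / Real.sqrt cβ))
          ((1/(1 + (ψ' x / ψ x / Real.sqrt cβ)^2)) * ((-cβ - (ψ' x / ψ x)^2) / Real.sqrt cβ)) x :=
        (Real.hasDerivAt_arctan _).comp x (hf.div_const _)
      have htot : HasDerivAt G
          ((1/(1 + (ψ' x / ψ x / Real.sqrt cβ)^2)) * ((-cβ - (ψ' x / ψ x)^2) / Real.sqrt cβ)
            + Real.sqrt cβ * 1) x :=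
        harc.add ((hasDerivAt_id x).const_mul _)
      have hzero : (1/(1 + (ψ' x / ψ x / Real.sqrt cβ)^2)) * ((-cβ - (ψ' x / ψ x)^2) / Real.sqrt cβ)
            + Real.sqrt cβ * 1 = 0 := by
        have hq : (Real.sqrt cβ)^2 = cβ := Real.sq_sqrt hc0.le
        have hcq : 0 < cβ + (ψ' x / ψ x)^2 := by positivity
        have h1 : 1 + (ψ' x / ψ x / Real.sqrt cβ)^2 = (cβ + (ψ' x / ψ x)^2)/cβ := by
          rw [div_pow, hq, add_div, div_self hc0.ne']
        rw [h1, one_div_div]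
        have heq : cβ / (cβ + (ψ' x / ψ x)^2) * ((-cβ - (ψ' x / ψ x)^2) / Real.sqrt cβ)
            = -(cβ / Real.sqrt cβ) := by
          field_simp
          linear_combination
        rw [heq, mul_one, Real.div_sqrt]
        ring
      rw [hzero] at htot
      exact htot.hasDerivWithinAt
    exact constant_of_has_deriv_right_zero hcont hderiv (β/2) ⟨hhalf, le_refl _⟩
  have hfb2 : ψ' (β/2) / ψ (β/2) = 0 := by rw [hbc]; simp
  have harctanF : Real.arctan (ψ' (Real.pi/2)/ψ (Real.pi/2) / Real.sqrt cβ)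
      = Real.sqrt cβ * ((β - Real.pi)/2) := by
    have h := hGconst
    simp only [hG, hfb2, zero_div, Real.arctan_zero, zero_add] at h
    linear_combination -h
  have hx0nonneg : 0 ≤ Real.sqrt cβ * ((β - Real.pi)/2) :=
    mul_nonneg hscpos.le (by linarith)
  have hx0le : Real.sqrt cβ * ((β - Real.pi)/2) ≤ Real.pi/4 := by
    calc Real.sqrt cβ * ((β - Real.pi)/2) ≤ (1/2) * ((β - Real.pi)/2) :=
          mul_le_mul_of_nonneg_right hsc2 (by linarith)
    _ ≤ Real.pi/4 := by linarith
  have htanF : ψ' (Real.pi/2)/ψ (Real.pi/2) / Real.sqrt cβ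
      = Real.tan (Real.sqrt cβ * ((β - Real.pi)/2)) := by
    rw [← harctanF, Real.tan_arctan]
  have hFle : ψ' (Real.pi/2)/ψ (Real.pi/2) ≤ Real.pi * cβ := by
    have h2x := tan_le_two_mul hx0nonneg hx0le
    rw [← htanF] at h2x
    rw [div_le_iff₀ hscpos] at h2x
    calc ψ' (Real.pi/2)/ψ (Real.pi/2)
        ≤ 2 * (Real.sqrt cβ * ((β - Real.pi)/2)) * Real.sqrt cβ := h2x
    _ = (Real.sqrt cβ * Real.sqrt cβ) * (β - Real.pi) := by ring
    _ = cβ * (β - Real.pi) := by rw [hsc]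
    _ ≤ Real.pi * cβ := by nlinarith [mul_nonneg (by linarith : (0:ℝ) ≤ 2*Real.pi - β) hc0.le]
  -- Step 3 : ψ'(π/2)/ψ(π/2) + cβ·sin γ ≤ ψ'(θ₁)/ψ(θ₁)
  have hmemIcc2 : Icc θ₁ (Real.pi/2) ⊆ Ioo 0 β :=
    fun x hx => ⟨lt_of_lt_of_le hθ₁.1 hx.1, by linarith [hx.2]⟩
  have hsinpos : ∀ x ∈ Icc θ₁ (Real.pi/2), 0 < Real.sin x := fun x hx =>
    Real.sin_pos_of_pos_of_lt_pi (lt_of_lt_of_le hθ₁.1 hx.1) (by linarith [hx.2])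
  have hφanti : AntitoneOn (fun θ => ψ' θ / ψ θ - cβ * (Real.cos θ / Real.sin θ))
      (Icc θ₁ (Real.pi/2)) := by
    apply antitoneOn_of_deriv_nonpos (convex_Icc _ _)
    · intro x hx
      have hxm := hmemIcc2 hx
      have hψx := (hpos x hxm).ne'
      have hsx := (hsinpos x hx).ne'
      exact (((hode x hxm).continuousAt.div (hder x hxm).continuousAt hψx).sub
        (continuousAt_const.mul
          ((Real.continuous_cos.continuousAt.div Real.continuous_sin.continuousAt hsx)))).continuousWithinAt
    · intro x hx
      rw [interior_Icc] at hx
      have hxm := hmemIcc2 (Ioo_subset_Icc_self hx)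
      have hψx := (hpos x hxm).ne'
      have hsx := (hsinpos x (Ioo_subset_Icc_self hx)).ne'
      have hctd : HasDerivAt (fun θ => Real.cos θ / Real.sin θ)
          ((-Real.sin x * Real.sin x - Real.cos x * Real.cos x) / Real.sin x ^ 2) x :=
        (Real.hasDerivAt_cos x).div (Real.hasDerivAt_sin x) hsx
      exact (((hode x hxm).div (hder x hxm) hψx).sub
        (hctd.const_mul cβ)).differentiableAt.differentiableWithinAt
    · intro x hx
      rw [interior_Icc] at hx
      have hxmem := Ioo_subset_Icc_self hx
      have hxm := hmemIcc2 hxmem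
      have hψx : 0 < ψ x := hpos x hxm
      have hsx : 0 < Real.sin x := hsinpos x hxmem
      have hV : Vpot β x = 1 / Real.sin x ^ 2 := by
        unfold Vpot
        rw [if_pos hx.2]
      have hctd : HasDerivAt (fun θ => Real.cos θ / Real.sin θ)
          ((-Real.sin x * Real.sin x - Real.cos x * Real.cos x) / Real.sin x ^ 2) x :=
        (Real.hasDerivAt_cos x).div (Real.hasDerivAt_sin x) hsx.ne'
      have hd : HasDerivAt (fun θ => ψ' θ / ψ θ - cβ * (Real.cos θ / Real.sin θ))
          ((-(cβ * Vpot β x * ψ x) * ψ x - ψ' x * ψ' x) / (ψ x)^2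
            - cβ * ((-Real.sin x * Real.sin x - Real.cos x * Real.cos x) / Real.sin x ^ 2)) x :=
        ((hode x hxm).div (hder x hxm) hψx.ne').sub (hctd.const_mul cβ)
      rw [hd.deriv]
      have hone : Real.sin x ^ 2 + Real.cos x ^ 2 = 1 := Real.sin_sq_add_cos_sq x
      have hval : (-(cβ * Vpot β x * ψ x) * ψ x - ψ' x * ψ' x) / (ψ x)^2
            - cβ * ((-Real.sin x * Real.sin x - Real.cos x * Real.cos x) / Real.sin x ^ 2)
          = -(ψ' x / ψ x)^2 := by
        rw [hV]
        field_simp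
        linear_combination (cβ * ψ x ^ 2) * hone
      rw [hval]
      have := sq_nonneg (ψ' x / ψ x)
      linarith
  have hAF : ψ' (Real.pi/2)/ψ (Real.pi/2) - cβ * (Real.cos (Real.pi/2) / Real.sin (Real.pi/2))
      ≤ ψ' θ₁ / ψ θ₁ - cβ * (Real.cos θ₁ / Real.sin θ₁) :=
    hφanti ⟨le_refl _, hθ₁.2⟩ ⟨hθ₁.2, le_refl _⟩ hθ₁.2
  rw [Real.cos_pi_div_two, zero_div, mul_zero, sub_zero] at hAF
  have hcotθ : Real.cos θ₁ / Real.sin θ₁ = Real.sin γ := by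
    rw [← Real.cot_eq_cos_div_sin, hcot]
  rw [hcotθ] at hAF
  -- Final algebra
  have hs0 : 0 ≤ Real.sin γ := Real.sin_nonneg_of_nonneg_of_le_pi (by linarith) hγ2
  have hu0 : Real.cos γ ≤ 0 := Real.cos_nonpos_of_pi_div_two_le_of_le hγ1 (by linarith)
  have hu1 : -1 ≤ Real.cos γ := Real.neg_one_le_cos γ
  have hsu : Real.sin γ ^ 2 + Real.cos γ ^ 2 = 1 := Real.sin_sq_add_cos_sq γ
  set F := ψ' (Real.pi/2)/ψ (Real.pi/2) with hFdef
  set A := ψ' θ₁ / ψ θ₁ with hAdef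
  set s := Real.sin γ
  set u := Real.cos γ
  have hA' : F + cβ * s ≤ A := by linarith
  have hF315 : F ≤ (63/20) * cβ := by
    have hpile : Real.pi ≤ 63/20 := by linarith [Real.pi_lt_d2]
    have h := mul_le_mul_of_nonneg_right hpile hc0.le
    linarith
  have hden : (0:ℝ) < 1 + s^2 := by positivity
  rw [div_mul_eq_mul_div, le_div_iff₀ hden]
  have h2u : (0:ℝ) ≤ 2 + u := by linarith
  have key : (63/20) * ((-u)*(1+u)) ≤ (2+u) * s := by
    have ha : 0 ≤ (63/20) * ((-u)*(1+u)) :=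
      mul_nonneg (by norm_num) (mul_nonneg (neg_nonneg.2 hu0) (by linarith))
    have hb : 0 ≤ (2+u)*s := mul_nonneg h2u hs0
    have hsq2 : ((63/20) * ((-u)*(1+u)))^2 ≤ ((2+u)*s)^2 := by
      have hB : 0 ≤ (2+u)^2*(1-u) - (3969/400)*(u^2*(1+u)) := by
        have h1 : 0 ≤ (-u)*(u+4/5)^2 := mul_nonneg (neg_nonneg.2 hu0) (sq_nonneg _)
        have h2 : 0 ≤ (u + 768/1000)^2 := sq_nonneg _
        nlinarith [h1, h2]
      have hP : 0 ≤ (1+u) * ((2+u)^2*(1-u) - (3969/400)*(u^2*(1+u))) :=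
        mul_nonneg (by linarith) hB
      have hs2 : s^2 = 1 - u^2 := by linarith
      rw [mul_pow (2+u) s, hs2]
      nlinarith [hP]
    calc (63/20)*((-u)*(1+u)) = Real.sqrt (((63/20)*((-u)*(1+u)))^2) := (Real.sqrt_sq ha).symm
    _ ≤ Real.sqrt (((2+u)*s)^2) := Real.sqrt_le_sqrt hsq2
    _ = (2+u)*s := Real.sqrt_sq hb
  have h13 : F * ((-u)*(1+u)) ≤ cβ * ((2+u)*s) := by
    calc F * ((-u)*(1+u)) ≤ ((63/20)*cβ) * ((-u)*(1+u)) :=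
          mul_le_mul_of_nonneg_right hF315 (mul_nonneg (neg_nonneg.2 hu0) (by linarith))
    _ = cβ * ((63/20) * ((-u)*(1+u))) := by ring
    _ ≤ cβ * ((2+u)*s) := mul_le_mul_of_nonneg_left key hc0.le
  have h4 : (2+u)*(F + cβ*s) ≤ (2+u)*A := mul_le_mul_of_nonneg_left hA' h2u
  have e1 : F*(1+s^2) = (2+u)*F + F*((-u)*(1+u)) := by linear_combination F * hsu
  linarith [h13, h4, e1]
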